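/- For any m ≥ 0, the FI-module M(m) over a commutative ring k has injectivity degree 0 and surjectivity degree m: for every a ≥ 0, multiplication by T: Φ_a(M(m))_n → Φ_a(M(m))_{n+1} is injective for all n ≥ 0 and is surjective (hence an isomorphism) for all n ≥ m. -/

import Mathlib

open Function

universe u

/-- An FI-module over `k`, presented via the standard skeleton of the category FI:
objects are natural numbers `n` (standing for `{1,…,n}`) and morphisms `m ⟶ n` are
injections `Fin m ↪ Fin n`. -/
structure FIModule (k : Type) [CommRing k] where
  obj : ℕ → Type
  [isAddCommGroup : ∀ n, AddCommGroup (obj n)]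
  [isModule : ∀ n, Module k (obj n)]
  map : ∀ {m n : ℕ}, (Fin m ↪ Fin n) → (obj m →ₗ[k] obj n)
  map_id : ∀ n : ℕ, map (Embedding.refl (Fin n)) = LinearMap.id
  map_comp : ∀ {m n p : ℕ} (f : Fin m ↪ Fin n) (g : Fin n ↪ Fin p),
    map (f.trans g) = (map g).comp (map f)

attribute [instance] FIModule.isAddCommGroup FIModule.isModule

variable {k : Type} [CommRing k]

/-- A sub-FI-module of an FI-module: a submodule of each `V_n`, preserved by all the
maps induced by injections. -/
structure SubFI (V : FIModule k) where
  carrier : ∀ n : ℕ, Submodule k (V.obj n)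
  map_mem : ∀ {m n : ℕ} (f : Fin m ↪ Fin n) {x : V.obj m},
    x ∈ carrier m → V.map f x ∈ carrier n

/-- An FI-module is finitely generated if some finite set of elements of `∐ V_n` is
contained in no proper sub-FI-module. -/
def FIModule.FinitelyGenerated (V : FIModule k) : Prop :=
  ∃ S : Finset (Σ n : ℕ, V.obj n),
    ∀ N : SubFI V, (∀ s ∈ S, s.2 ∈ N.carrier s.1) → ∀ (n : ℕ) (x : V.obj n), x ∈ N.carrier n

/-- An FI-module is generated in degree `≤ d` if the only sub-FI-module containing all
`V_m` for `m ≤ d` is the whole module. -/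
def FIModule.GeneratedInDegreeLE (V : FIModule k) (d : ℕ) : Prop :=
  ∀ N : SubFI V, (∀ m : ℕ, m ≤ d → ∀ x : V.obj m, x ∈ N.carrier m) →
    ∀ (n : ℕ) (x : V.obj n), x ∈ N.carrier n

/-- The `S_n`-representation on `V_n` induced by an FI-module structure. -/
def FIModule.rep (V : FIModule k) (n : ℕ) :
    Representation k (Equiv.Perm (Fin n)) (V.obj n) where
  toFun σ := V.map σ.toEmbedding
  map_one' := by
    show V.map (1 : Equiv.Perm (Fin n)).toEmbedding = 1
    have h : (1 : Equiv.Perm (Fin n)).toEmbedding = Embedding.refl (Fin n) := rfl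
    rw [h, V.map_id]; rfl
  map_mul' σ τ := by
    show V.map (σ * τ).toEmbedding = V.map σ.toEmbedding * V.map τ.toEmbedding
    have h : (σ * τ).toEmbedding = (τ.toEmbedding).trans σ.toEmbedding := rfl
    rw [h, V.map_comp]; rfl

/-- The standard inclusion `{1,…,n} ↪ {1,…,n+1}`. -/
def succEmb (n : ℕ) : Fin n ↪ Fin (n + 1) := Fin.castLEEmb (Nat.le_succ n)

/-! ### Coinvariants and stability degree -/

/-- The permutation of `{1,…,a+n}` induced by a permutation of the last `n` letters
(the first `a` letters are fixed).  This realizes the action of `S_n` on the shifted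
FI-module `S_{+a} V`. -/
def shiftPerm (a n : ℕ) (σ : Equiv.Perm (Fin n)) : Equiv.Perm (Fin (a + n)) :=
  finSumFinEquiv.symm.trans ((Equiv.sumCongr (Equiv.refl (Fin a)) σ).trans finSumFinEquiv)

/-- The submodule of `V_{a+n}` spanned by all `σ·v - v` with `σ ∈ S_n` (acting on the last
`n` letters): the quotient by it is the coinvariant module `Φ_a(V)_n = (V_{a+n})_{S_n}`. -/
def coinvRel (V : FIModule k) (a n : ℕ) : Submodule k (V.obj (a + n)) :=
  Submodule.span k {x | ∃ (σ : Equiv.Perm (Fin n)) (v : V.obj (a + n)),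
    x = V.map (shiftPerm a n σ).toEmbedding v - v}

/-- The coinvariant module `Φ_a(V)_n = (V_{a+n})_{S_n}`. -/
abbrev coinvObj (V : FIModule k) (a n : ℕ) := V.obj (a + n) ⧸ coinvRel V a n

/-- The standard inclusion `{1,…,a+n} ↪ {1,…,a+(n+1)}`, inducing multiplication by `T`
on `Φ_a(V)`. -/
def stabEmb (a n : ℕ) : Fin (a + n) ↪ Fin (a + (n + 1)) :=
  Fin.castLEEmb (by omega)

/-- `V` has injectivity degree `≤ s`: for every `a ≥ 0`, multiplication by `T` on
`Φ_a(V)`, i.e. the map `(V_{a+n})_{S_n} → (V_{a+n+1})_{S_{n+1}}` induced by the standard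
inclusion, is injective for all `n ≥ s`.  (Stated elementwise: the preimage of the
relation submodule is the relation submodule.) -/
def FIModule.InjectivityDegreeLE (V : FIModule k) (s : ℕ) : Prop :=
  ∀ a n : ℕ, s ≤ n → ∀ v : V.obj (a + n),
    V.map (stabEmb a n) v ∈ coinvRel V a (n + 1) → v ∈ coinvRel V a n

/-- `V` has surjectivity degree `≤ s`: for every `a ≥ 0`, multiplication by `T` on
`Φ_a(V)` is surjective for all `n ≥ s`. -/
def FIModule.SurjectivityDegreeLE (V : FIModule k) (s : ℕ) : Prop :=
  ∀ a n : ℕ, s ≤ n → ∀ w : V.obj (a + (n + 1)), ∃ v : V.obj (a + n),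
    w - V.map (stabEmb a n) v ∈ coinvRel V a (n + 1)

/-- `V` has stability degree `≤ s`: for every `a ≥ 0`, multiplication by
`T : Φ_a(V)_n → Φ_a(V)_{n+1}` is an isomorphism (both injective and surjective)
for all `n ≥ s`. -/
def FIModule.StabilityDegreeLE (V : FIModule k) (s : ℕ) : Prop :=
  V.InjectivityDegreeLE s ∧ V.SurjectivityDegreeLE s

/-! ### The free FI-modules `M(m)` and `M(W)` -/

/-- The free FI-module `M(m)`: `M(m)_n` is the free `k`-module on the set
`Hom_FI(m,n)` of injections `Fin m ↪ Fin n`. -/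
noncomputable def Mfree (k : Type) [CommRing k] (m : ℕ) : FIModule k where
  obj n := (Fin m ↪ Fin n) →₀ k
  map g := Finsupp.lmapDomain k k (fun f => f.trans g)
  map_id n := by
    show Finsupp.lmapDomain k k (fun f : Fin m ↪ Fin n => f.trans (Embedding.refl (Fin n)))
        = LinearMap.id
    have h : (fun f : Fin m ↪ Fin n => f.trans (Embedding.refl (Fin n))) = id := rfl
    rw [h, Finsupp.lmapDomain_id]
  map_comp {m' n' p'} f g := by
    show Finsupp.lmapDomain k k (fun h : Fin m ↪ Fin m' => h.trans (f.trans g))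
        = (Finsupp.lmapDomain k k (fun h : Fin m ↪ Fin n' => h.trans g)).comp
            (Finsupp.lmapDomain k k (fun h : Fin m ↪ Fin m' => h.trans f))
    have hcomp : (fun h : Fin m ↪ Fin m' => h.trans (f.trans g))
        = (fun h : Fin m ↪ Fin n' => h.trans g) ∘ (fun h : Fin m ↪ Fin m' => h.trans f) := rfl
    rw [hcomp, Finsupp.lmapDomain_comp]

section MW

variable {a : ℕ} {W : Type} [AddCommGroup W] [Module k W]

/-- The relation submodule presenting `M(W)_n = W ⊗_{k[S_a]} M(a)_n` as a quotient of
the free module `⊕_{f : Fin a ↪ Fin n} W`: we identify `(f∘σ) ⊗ w` with `f ⊗ (σ·w)`. -/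
noncomputable def MWrel (ρ : Representation k (Equiv.Perm (Fin a)) W) (n : ℕ) :
    Submodule k ((Fin a ↪ Fin n) →₀ W) :=
  Submodule.span k {x | ∃ (σ : Equiv.Perm (Fin a)) (f : Fin a ↪ Fin n) (w : W),
    x = Finsupp.single (σ.toEmbedding.trans f) w - Finsupp.single f (ρ σ w)}

/-- The underlying module `M(W)_n = W ⊗_{k[S_a]} M(a)_n` of the FI-module `M(W)`
freely generated by the `S_a`-representation `W`. -/
abbrev MWobj (ρ : Representation k (Equiv.Perm (Fin a)) W) (n : ℕ) :=
  ((Fin a ↪ Fin n) →₀ W) ⧸ MWrel ρ n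

/-- The map on the free modules underlying `M(W)` induced by an injection. -/
noncomputable def MWmapAux (ρ : Representation k (Equiv.Perm (Fin a)) W)
    {n n' : ℕ} (g : Fin n ↪ Fin n') :
    ((Fin a ↪ Fin n) →₀ W) →ₗ[k] ((Fin a ↪ Fin n') →₀ W) :=
  Finsupp.lmapDomain W k (fun f => f.trans g)

theorem MWrel_le (ρ : Representation k (Equiv.Perm (Fin a)) W) {n n' : ℕ}
    (g : Fin n ↪ Fin n') :
    MWrel ρ n ≤ (MWrel (k := k) ρ n').comap (MWmapAux ρ g) := by
  rw [MWrel, Submodule.span_le]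
  rintro x ⟨σ, f, w, rfl⟩
  simp only [SetLike.mem_coe, Submodule.mem_comap, map_sub, MWmapAux,
    Finsupp.lmapDomain_apply, Finsupp.mapDomain_single]
  exact Submodule.subset_span ⟨σ, f.trans g, w, rfl⟩

/-- The FI-module map of `M(W)` induced by an injection. -/
noncomputable def MWmap (ρ : Representation k (Equiv.Perm (Fin a)) W)
    {n n' : ℕ} (g : Fin n ↪ Fin n') : MWobj ρ n →ₗ[k] MWobj ρ n' :=
  Submodule.mapQ _ _ (MWmapAux ρ g) (MWrel_le ρ g)

/-- The FI-module `M(W) = W ⊗_{k[S_a]} M(a)` freely generated by an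
`S_a`-representation `W`, i.e. the image of `W` under the functor `μ_a` left adjoint
to `V ↦ V_a`. -/
noncomputable def MFI (ρ : Representation k (Equiv.Perm (Fin a)) W) : FIModule k where
  obj n := MWobj ρ n
  map g := MWmap ρ g
  map_id n := by
    show MWmap ρ (Embedding.refl (Fin n)) = LinearMap.id
    apply Submodule.linearMap_qext
    apply Finsupp.lhom_ext
    intro f w
    simp only [LinearMap.comp_apply, MWmap, MWmapAux, Submodule.mkQ_apply,
      Submodule.mapQ_apply, Finsupp.lmapDomain_apply, Finsupp.mapDomain_single,
      LinearMap.id_apply]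
    rfl
  map_comp f g := by
    show MWmap ρ (f.trans g) = (MWmap ρ g).comp (MWmap ρ f)
    apply Submodule.linearMap_qext
    apply Finsupp.lhom_ext
    intro h w
    simp only [LinearMap.comp_apply, MWmap, MWmapAux, Submodule.mkQ_apply,
      Submodule.mapQ_apply, Finsupp.lmapDomain_apply, Finsupp.mapDomain_single]
    rfl

end MW


/-! ### Auxiliary material for the proof -/

section StabilityAux

lemma shiftPerm_apply_lt {a n : ℕ} (σ : Equiv.Perm (Fin n)) (x : Fin (a + n))
    (h : x.val < a) : ((shiftPerm a n σ) x).val = x.val := by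
  obtain ⟨i, rfl⟩ : ∃ i : Fin a, x = Fin.castAdd n i := ⟨⟨x.val, h⟩, by ext; rfl⟩
  simp only [shiftPerm, Equiv.trans_apply, finSumFinEquiv_symm_apply_castAdd,
    Equiv.sumCongr_apply, Sum.map_inl, Equiv.refl_apply, finSumFinEquiv_apply_left,
    Fin.coe_castAdd]

lemma shiftPerm_apply_ge {a n : ℕ} (σ : Equiv.Perm (Fin n)) (x : Fin (a + n))
    (h : a ≤ x.val) :
    ((shiftPerm a n σ) x).val = a + (σ ⟨x.val - a, by have := x.isLt; omega⟩).val := by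
  obtain ⟨i, rfl⟩ : ∃ i : Fin n, x = Fin.natAdd a i :=
    ⟨⟨x.val - a, by have := x.isLt; omega⟩, by ext; simp; omega⟩
  have h2 : ∀ (hh : (Fin.natAdd a i).val - a < n),
      (⟨(Fin.natAdd a i).val - a, hh⟩ : Fin n) = i := by
    intro hh; ext; simp
  rw [h2]
  simp only [shiftPerm, Equiv.trans_apply, finSumFinEquiv_symm_apply_natAdd,
    Equiv.sumCongr_apply, Sum.map_inr, finSumFinEquiv_apply_right, Fin.coe_natAdd]

/-- The orbit invariant of an injection `Fin m ↪ Fin (a+n)` under the action of `S_n`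
on the last `n` letters: the induced partial injection into the first `a` letters. -/
def MfreeInv (m a n : ℕ) (f : Fin m ↪ Fin (a + n)) : Fin m → Option (Fin a) :=
  fun j => if h : (f j).val < a then some ⟨(f j).val, h⟩ else none

lemma mfreeInv_trans_shiftPerm {m a n : ℕ} (σ : Equiv.Perm (Fin n))
    (f : Fin m ↪ Fin (a + n)) :
    MfreeInv m a n (f.trans (shiftPerm a n σ).toEmbedding) = MfreeInv m a n f := by
  funext j
  simp only [MfreeInv, Function.Embedding.trans_apply, Equiv.coe_toEmbedding]
  by_cases h : (f j).val < a
  · have hv := shiftPerm_apply_lt σ (f j) h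
    rw [dif_pos (by omega), dif_pos h]
    simp [hv]
  · have hv := shiftPerm_apply_ge σ (f j) (le_of_not_gt h)
    rw [dif_neg (by omega), dif_neg h]

lemma mfreeInv_trans_stabEmb {m a n : ℕ} (f : Fin m ↪ Fin (a + n)) :
    MfreeInv m a (n + 1) (f.trans (stabEmb a n)) = MfreeInv m a n f := by
  funext j
  simp only [MfreeInv, Function.Embedding.trans_apply, stabEmb, Fin.castLEEmb_apply,
    Fin.coe_castLE]

lemma exists_perm_of_mfreeInv_eq {m a n : ℕ} {f f' : Fin m ↪ Fin (a + n)}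
    (h : MfreeInv m a n f = MfreeInv m a n f') :
    ∃ σ : Equiv.Perm (Fin n), f' = f.trans (shiftPerm a n σ).toEmbedding := by
  classical
  have hlt : ∀ j, ((f j).val < a ↔ (f' j).val < a) ∧
      ((f j).val < a → (f j).val = (f' j).val) := by
    intro j
    have hj := congrFun h j
    simp only [MfreeInv] at hj
    by_cases h1 : (f j).val < a
    · rw [dif_pos h1] at hj
      by_cases h2 : (f' j).val < a
      · rw [dif_pos h2] at hj
        simp only [Option.some.injEq, Fin.mk.injEq] at hj
        exact ⟨by omega, fun _ => hj⟩
      · rw [dif_neg h2] at hj; exact absurd hj (by simp)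
    · rw [dif_neg h1] at hj
      by_cases h2 : (f' j).val < a
      · rw [dif_pos h2] at hj; exact absurd hj (by simp)
      · exact ⟨by omega, fun hc => absurd hc h1⟩
  set u : {j : Fin m // a ≤ (f j).val} → Fin n :=
    fun j => ⟨(f j.1).val - a, by have := (f j.1).isLt; omega⟩ with hu_def
  set u' : {j : Fin m // a ≤ (f j).val} → Fin n :=
    fun j => ⟨(f' j.1).val - a, by have := (f' j.1).isLt; omega⟩ with hu'_def
  have hu : Function.Injective u := by
    rintro ⟨j1, hj1⟩ ⟨j2, hj2⟩ hj
    simp only [hu_def, Fin.mk.injEq] at hj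
    have : f j1 = f j2 := Fin.ext (by omega)
    exact Subtype.ext (f.injective this)
  have hu' : Function.Injective u' := by
    rintro ⟨j1, hj1⟩ ⟨j2, hj2⟩ hj
    have hj1' : a ≤ (f' j1).val := le_of_not_gt (fun hc => by
      have := (hlt j1).1; omega)
    have hj2' : a ≤ (f' j2).val := le_of_not_gt (fun hc => by
      have := (hlt j2).1; omega)
    simp only [hu'_def, Fin.mk.injEq] at hj
    have : f' j1 = f' j2 := Fin.ext (by omega)
    exact Subtype.ext (f'.injective this)
  let e : {x // x ∈ Set.range u} ≃ {x // x ∈ Set.range u'} :=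
    (Equiv.ofInjective u hu).symm.trans (Equiv.ofInjective u' hu')
  refine ⟨e.extendSubtype, ?_⟩
  apply DFunLike.ext
  intro j
  simp only [Function.Embedding.trans_apply, Equiv.coe_toEmbedding]
  by_cases hj : (f j).val < a
  · have h1 := shiftPerm_apply_lt e.extendSubtype (f j) hj
    have h2 := (hlt j).2 hj
    exact Fin.ext (by omega)
  · have hj' : a ≤ (f j).val := le_of_not_gt hj
    have h1 := shiftPerm_apply_ge e.extendSubtype (f j) hj'
    have hz : (⟨(f j).val - a, by have := (f j).isLt; omega⟩ : Fin n) = u ⟨j, hj'⟩ := rfl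
    have hmem : u ⟨j, hj'⟩ ∈ Set.range u := ⟨⟨j, hj'⟩, rfl⟩
    have h3 : e.extendSubtype (u ⟨j, hj'⟩) = (e ⟨u ⟨j, hj'⟩, hmem⟩ : Fin n) :=
      Equiv.extendSubtype_apply_of_mem e _ hmem
    have h4 : (e ⟨u ⟨j, hj'⟩, hmem⟩ : Fin n) = u' ⟨j, hj'⟩ := by
      show (((Equiv.ofInjective u hu).symm.trans (Equiv.ofInjective u' hu'))
        ⟨u ⟨j, hj'⟩, hmem⟩ : Fin n) = u' ⟨j, hj'⟩
      rw [Equiv.trans_apply]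
      congr 1
      have : (⟨u ⟨j, hj'⟩, hmem⟩ : {x // x ∈ Set.range u}) =
          Equiv.ofInjective u hu ⟨j, hj'⟩ := rfl
      rw [this, Equiv.symm_apply_apply]
      rfl
    have hja : a ≤ (f' j).val := le_of_not_gt (fun hc => by
      have := (hlt j).1; omega)
    have hval : (u' ⟨j, hj'⟩).val = (f' j).val - a := rfl
    refine (Fin.ext ?_).symm
    rw [h1, hz, h3, h4, hval]
    omega

lemma mfree_map_eq_mapDomain (k : Type) [CommRing k] {m n n' : ℕ} (g : Fin n ↪ Fin n')
    (v : (Mfree k m).obj n) :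
    (Mfree k m).map g v = Finsupp.mapDomain (fun f => f.trans g) v := rfl

lemma mfree_map_eq_mapDomain' (k : Type) [CommRing k] {m n n' : ℕ} (g : Fin n ↪ Fin n')
    (v : (Fin m ↪ Fin n) →₀ k) :
    (Mfree k m).map g v = Finsupp.mapDomain (fun f => f.trans g) v := rfl

lemma mfree_mapDomain_map (k : Type) [CommRing k] {m n n' : ℕ} {β : Type}
    (φ : (Fin m ↪ Fin n') → β) (g : Fin n ↪ Fin n') (v : (Mfree k m).obj n) :
    Finsupp.mapDomain φ ((Mfree k m).map g v) = Finsupp.mapDomain (φ ∘ fun f => f.trans g) v :=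
  Finsupp.mapDomain_comp.symm

lemma mfreeInv_kills_rel (k : Type) [CommRing k] (m a n : ℕ) :
    ∀ w ∈ coinvRel (Mfree k m) a n,
      Finsupp.mapDomain (MfreeInv m a n) w = (0 : (Fin m → Option (Fin a)) →₀ k) := by
  have hle : coinvRel (Mfree k m) a n ≤
      LinearMap.ker (@id ((Mfree k m).obj (a + n) →ₗ[k] ((Fin m → Option (Fin a)) →₀ k))
        (Finsupp.lmapDomain k k (MfreeInv m a n))) := by
    rw [coinvRel, Submodule.span_le]
    rintro x ⟨σ, v, rfl⟩
    have key : Finsupp.mapDomain (MfreeInv m a n)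
        ((Mfree k m).map (shiftPerm a n σ).toEmbedding v)
        = Finsupp.mapDomain (MfreeInv m a n) v := by
      refine (mfree_mapDomain_map k _ _ _).trans ?_
      congr 1
      exact funext fun f => mfreeInv_trans_shiftPerm σ f
    simp only [SetLike.mem_coe, LinearMap.mem_ker, map_sub, sub_eq_zero]
    exact key
  intro w hw
  have h0 := hle hw
  rw [LinearMap.mem_ker] at h0
  exact h0

end StabilityAux

/-- **Stability degrees of the free FI-modules `M(m)`**
(Church–Ellenberg–Farb, Proposition 2.40).
Over any commutative ring `k`, the FI-module `M(m)` has injectivity degree `0` and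
surjectivity degree `m`: for every `a ≥ 0`, multiplication by
`T : Φ_a(M(m))_n → Φ_a(M(m))_{n+1}` is injective for all `n ≥ 0`, and surjective
(hence an isomorphism) for all `n ≥ m`. -/
theorem mfree_stability_degrees (k : Type) [CommRing k] (m : ℕ) :
    (Mfree k m).InjectivityDegreeLE 0 ∧ (Mfree k m).SurjectivityDegreeLE m := by
  constructor
  · -- Injectivity degree 0
    intro a n _ v hv
    classical
    by_cases hne : Nonempty (Fin m ↪ Fin (a + n))
    · obtain ⟨f₀⟩ := hne
      set secf : (Fin m → Option (Fin a)) → (Fin m ↪ Fin (a + n)) :=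
        fun i => if h : ∃ g : Fin m ↪ Fin (a + n), MfreeInv m a n g = i
          then h.choose else f₀ with hsecf
      -- every element is congruent mod `coinvRel` to its "canonical form"
      have key : ∀ w : (Fin m ↪ Fin (a + n)) →₀ k,
          w - Finsupp.mapDomain secf (Finsupp.mapDomain (MfreeInv m a n) w)
            ∈ coinvRel (Mfree k m) a n := by
        intro w
        induction w using Finsupp.induction_linear with
        | zero => simp; exact Submodule.zero_mem _
        | add w1 w2 ih1 ih2 =>
          have h3 := add_mem ih1 ih2
          refine (congrArg (fun x => x ∈ coinvRel (Mfree k m) a n)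
            (?_ : w1 + w2 - Finsupp.mapDomain secf (Finsupp.mapDomain (MfreeInv m a n) (w1 + w2))
              = (w1 - Finsupp.mapDomain secf (Finsupp.mapDomain (MfreeInv m a n) w1))
                + (w2 - Finsupp.mapDomain secf (Finsupp.mapDomain (MfreeInv m a n) w2)))).mpr h3
          simp only [Finsupp.mapDomain_add]; abel
        | single f c =>
          rw [Finsupp.mapDomain_single, Finsupp.mapDomain_single]
          have hex : ∃ g : Fin m ↪ Fin (a + n), MfreeInv m a n g = MfreeInv m a n f :=
            ⟨f, rfl⟩
          have hg : MfreeInv m a n (secf (MfreeInv m a n f)) = MfreeInv m a n f := by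
            rw [hsecf]
            simp only [dif_pos hex]
            exact hex.choose_spec
          obtain ⟨σ, hσ⟩ := exists_perm_of_mfreeInv_eq hg
          refine Submodule.subset_span ⟨σ, Finsupp.single (secf (MfreeInv m a n f)) c, ?_⟩
          rw [mfree_map_eq_mapDomain', Finsupp.mapDomain_single, ← hσ]
          rfl
      have h0 : Finsupp.mapDomain (MfreeInv m a (n + 1)) ((Mfree k m).map (stabEmb a n) v)
          = 0 := mfreeInv_kills_rel k m a (n + 1) _ hv
      have h1 : Finsupp.mapDomain (MfreeInv m a (n + 1)) ((Mfree k m).map (stabEmb a n) v)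
          = Finsupp.mapDomain (MfreeInv m a n) v := by
        refine (mfree_mapDomain_map k _ _ _).trans ?_
        have : (MfreeInv m a (n + 1) ∘ fun f => f.trans (stabEmb a n))
            = MfreeInv m a n := funext fun f => mfreeInv_trans_stabEmb f
        rw [this]
      have h2 : Finsupp.mapDomain (MfreeInv m a n) v = 0 := by rw [← h1, h0]
      have h3 := key v
      rw [h2, Finsupp.mapDomain_zero] at h3
      exact (congrArg (fun x => x ∈ coinvRel (Mfree k m) a n)
        (sub_zero (G := (Fin m ↪ Fin (a + n)) →₀ k) v)).mp h3
    · have hv0 : v = 0 := Finsupp.ext fun f => absurd ⟨f⟩ hne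
      rw [hv0]
      exact Submodule.zero_mem _
  · -- Surjectivity degree m
    intro a n hn w
    classical
    induction w using Finsupp.induction_linear with
    | zero => exact ⟨0, by simp; exact sub_mem (Submodule.zero_mem _) (Submodule.zero_mem _)⟩
    | add w1 w2 ih1 ih2 =>
      obtain ⟨v1, h1⟩ := ih1
      obtain ⟨v2, h2⟩ := ih2
      refine ⟨v1 + v2, ?_⟩
      have h3 := add_mem h1 h2
      rw [sub_add_sub_comm (α := (Mfree k m).obj (a + (n + 1))) w1 _ w2 _] at h3
      rw [map_add]
      exact h3
    | single f c =>
      -- find a free slot `y` among the last `n+1` letters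
      set im : Finset (Fin (n + 1)) := Finset.image
        (fun j : Fin m => if h : a ≤ (f j).val
          then (⟨(f j).val - a, by have := (f j).isLt; omega⟩ : Fin (n + 1))
          else ⟨0, by omega⟩) Finset.univ with him
      have hcard : im.card < Fintype.card (Fin (n + 1)) := by
        have h1 : im.card ≤ m := le_trans Finset.card_image_le (by simp)
        simp only [Fintype.card_fin]
        omega
      have hex : imᶜ.Nonempty := by
        rw [← Finset.card_pos, Finset.card_compl]
        omega
      obtain ⟨y, hy⟩ := hex
      rw [Finset.mem_compl] at hy
      have hy' : ∀ j : Fin m, a ≤ (f j).val → (f j).val - a ≠ y.val := by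
        intro j hj hc
        apply hy
        rw [him]
        refine Finset.mem_image.mpr ⟨j, Finset.mem_univ _, ?_⟩
        rw [dif_pos hj]
        exact Fin.ext hc
      set σ : Equiv.Perm (Fin (n + 1)) := Equiv.swap y ⟨n, by omega⟩ with hσ
      set g : Fin m ↪ Fin (a + (n + 1)) := f.trans (shiftPerm a (n + 1) σ).toEmbedding
        with hgdef
      have hg : ∀ j : Fin m, (g j).val < a + n := by
        intro j
        by_cases hj : (f j).val < a
        · have := shiftPerm_apply_lt σ (f j) hj
          simp only [hgdef, Function.Embedding.trans_apply, Equiv.coe_toEmbedding]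
          omega
        · have hj' : a ≤ (f j).val := le_of_not_gt hj
          have hval := shiftPerm_apply_ge σ (f j) hj'
          set z : Fin (n + 1) := ⟨(f j).val - a, by have := (f j).isLt; omega⟩ with hz
          have hzy : z ≠ y := fun hc => hy' j hj' (congrArg Fin.val hc)
          have hswl : σ y = ⟨n, by omega⟩ := Equiv.swap_apply_left y ⟨n, by omega⟩
          have hlast : σ z ≠ ⟨n, by omega⟩ := fun hc =>
            hzy (σ.injective (hc.trans hswl.symm))
          have hlt : (σ z).val < n := by
            have h5 := (σ z).isLt
            have h6 : (σ z).val ≠ n := fun hc => hlast (Fin.ext hc)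
            omega
          simp only [hgdef, Function.Embedding.trans_apply, Equiv.coe_toEmbedding]
          omega
      set v₀ : Fin m ↪ Fin (a + n) :=
        ⟨fun j => ⟨(g j).val, hg j⟩,
          fun j1 j2 hj => g.injective (by
            simp only [Fin.mk.injEq] at hj
            exact Fin.ext hj)⟩ with hv₀
      have hfac : v₀.trans (stabEmb a n) = g := by
        apply DFunLike.ext
        intro j
        apply Fin.ext
        rfl
      refine ⟨Finsupp.single v₀ c, ?_⟩
      rw [mfree_map_eq_mapDomain', Finsupp.mapDomain_single, hfac]
      have hgen : Finsupp.single g c - Finsupp.single f c ∈ coinvRel (Mfree k m) a (n + 1) := by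
        refine Submodule.subset_span ⟨σ, Finsupp.single f c, ?_⟩
        rw [mfree_map_eq_mapDomain', Finsupp.mapDomain_single, hgdef]
        rfl
      have := neg_mem hgen
      exact (congrArg (fun x => x ∈ coinvRel (Mfree k m) a (n + 1))
        (neg_sub (Finsupp.single g c) (Finsupp.single f c))).mp this
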